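/- Let α > 0, let f(y) = (1 + αy/(α+1))^{-1/α}, and define f_1(y) = 1 - y/(α+1) and f_{n+1}((1+1/n)y) = f_n(y) - (y/((α+1)n))·f_n(y)^{α+1} for 0 < y ≤ n. Then for all n ≥ 1 and 0 < y ≤ n, f_n(y) < f(y). -/

import Mathlib

open Real

private lemma key_ineq (α t : ℝ) (hα : 0 < α) (ht : 0 < t) (ht1 : t < 1) :
    (1 - t) ^ α * (1 + α * t) < 1 := by
  have h1t : (0:ℝ) < 1 - t := by linarith
  have h1t' : (0:ℝ) < 1 + α * t := by nlinarith
  have hlog1 : Real.log (1 - t) < -t := by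
    have := Real.log_lt_sub_one_of_pos h1t (by linarith : (1:ℝ) - t ≠ 1)
    linarith
  have hlog2 : Real.log (1 + α * t) < α * t := by
    have := Real.log_lt_sub_one_of_pos h1t' (by nlinarith : (1:ℝ) + α * t ≠ 1)
    linarith
  rw [Real.rpow_def_of_pos h1t, ← Real.exp_log h1t', ← Real.exp_add]
  have hsum : Real.log (1 - t) * α + Real.log (1 + α * t) < 0 := by nlinarith
  calc Real.exp (Real.log (1 - t) * α + Real.log (1 + α * t)) < Real.exp 0 :=
        Real.exp_lt_exp.mpr hsum
    _ = 1 := Real.exp_zero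

private lemma rpow_sub_rpow_le {a b p : ℝ} (ha : 0 ≤ a) (hab : a ≤ b) (hp : 1 ≤ p) :
    b ^ p - a ^ p ≤ p * b ^ (p - 1) * (b - a) := by
  rcases eq_or_lt_of_le (ha.trans hab) with hb | hb
  · have ha' : a = 0 := le_antisymm (hab.trans hb.symm.le) ha
    have hp0 : p ≠ 0 := by linarith
    simp [← hb, ha', Real.zero_rpow hp0]
  · have hs : -1 ≤ a / b - 1 := by
      have : 0 ≤ a / b := div_nonneg ha hb.le
      linarith
    have hbern := one_add_mul_self_le_rpow_one_add hs hp
    rw [add_sub_cancel] at hbern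
    rw [Real.div_rpow ha hb.le] at hbern
    have hbp : (0:ℝ) < b ^ p := Real.rpow_pos_of_pos hb p
    have hbp1 : b ^ (p - 1) * b = b ^ p := by
      have := Real.rpow_add hb (p - 1) 1
      rw [Real.rpow_one] at this
      rw [← this]
      ring_nf
    have hX : (0:ℝ) ≤ b ^ (p - 1) := (Real.rpow_pos_of_pos hb _).le
    have h2 : (1 + p * (a / b - 1)) * b ^ p ≤ a ^ p := by
      have := mul_le_mul_of_nonneg_right hbern hbp.le
      rwa [div_mul_cancel₀ _ hbp.ne'] at this
    have h3 : a / b * b ^ p = b ^ (p - 1) * a := by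
      rw [← hbp1]
      field_simp
    have h2' : b ^ p + p * (b ^ (p - 1) * a) - p * b ^ p ≤ a ^ p := by
      calc b ^ p + p * (b ^ (p - 1) * a) - p * b ^ p
          = (1 + p * (a / b - 1)) * b ^ p := by rw [← h3]; ring
        _ ≤ a ^ p := h2
    have h4 : p * (b ^ (p - 1) * b) = p * b ^ p := by rw [hbp1]
    nlinarith [h2', h4]

set_option maxHeartbeats 2000000 in
theorem stmt5 (α : ℝ) (hα : 0 < α) (f : ℝ → ℝ)
    (hf : ∀ y, f y = (1 + α * y / (α + 1)) ^ (-(1 / α)))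
    (fn : ℕ → ℝ → ℝ)
    (hfn1 : ∀ y, fn 1 y = 1 - y / (α + 1))
    (hfnrec : ∀ n : ℕ, 1 ≤ n → ∀ y : ℝ, 0 < y → y ≤ n →
      fn (n + 1) ((1 + 1 / n) * y) = fn n y - (y / ((α + 1) * n)) * (fn n y) ^ (α + 1)) :
    ∀ n : ℕ, 1 ≤ n → ∀ y : ℝ, 0 < y → y ≤ n → fn n y < f y := by
  have hα1 : (0:ℝ) < α + 1 := by linarith
  have hαne : α ≠ 0 := hα.ne'
  have hexp : -(1/α) < 0 := by
    have : 0 < 1/α := by positivity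
    linarith
  suffices H : ∀ n : ℕ, 1 ≤ n → ∀ y : ℝ, 0 < y → y ≤ n → 0 ≤ fn n y ∧ fn n y < f y by
    intro n hn y hy0 hyn; exact (H n hn y hy0 hyn).2
  intro n hn
  induction n, hn using Nat.le_induction with
  | base =>
    intro y hy0 hy1
    rw [Nat.cast_one] at hy1
    obtain ⟨t, ht_def⟩ : ∃ t : ℝ, t = y / (α + 1) := ⟨_, rfl⟩
    have ht0 : 0 < t := by rw [ht_def]; positivity
    have ht1 : t < 1 := by
      rw [ht_def, div_lt_one hα1]; linarith
    have hrw : α * y / (α + 1) = α * t := by rw [ht_def]; ring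
    rw [hfn1, hf, hrw, ← ht_def]
    constructor
    · rw [ht_def] at ht1 ⊢; linarith
    · have hk := key_ineq α t hα ht0 ht1
      have h1t : (0:ℝ) < 1 - t := by linarith
      have h1t' : (0:ℝ) < 1 + α * t := by nlinarith
      have hk2 : (1 - t) ^ α < (1 + α * t)⁻¹ := by
        rw [← one_div]
        exact (lt_div_iff₀ h1t').mpr hk
      have hk3 := Real.rpow_lt_rpow (by positivity) hk2 (by positivity : (0:ℝ) < 1/α)
      rw [← Real.rpow_mul h1t.le, mul_one_div, div_self hαne, Real.rpow_one,
        Real.inv_rpow h1t'.le, ← Real.rpow_neg h1t'.le] at hk3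
      exact hk3
  | succ n hn ih =>
    intro z hz0 hzn1
    push_cast at hzn1
    have hN : (0:ℝ) < n := by exact_mod_cast Nat.lt_of_lt_of_le Nat.zero_lt_one hn
    obtain ⟨y, hy_def⟩ : ∃ y : ℝ, y = z * n / (n + 1) := ⟨_, rfl⟩
    have hy0 : 0 < y := by rw [hy_def]; positivity
    have hyn : y ≤ (n:ℝ) := by
      rw [hy_def, div_le_iff₀ (by positivity)]
      nlinarith
    have hz : (1 + 1/(n:ℝ)) * y = z := by
      rw [hy_def]; field_simp
    have hrec := hfnrec n hn y hy0 hyn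
    rw [hz] at hrec
    obtain ⟨ha0, hab⟩ := ih y hy0 hyn
    obtain ⟨c, hc_def⟩ : ∃ c : ℝ, c = y / ((α + 1) * (n:ℝ)) := ⟨_, rfl⟩
    obtain ⟨A, hA_def⟩ : ∃ A : ℝ, A = 1 + α * y / (α + 1) := ⟨_, rfl⟩
    obtain ⟨B, hB_def⟩ : ∃ B : ℝ, B = 1 + α * z / (α + 1) := ⟨_, rfl⟩
    obtain ⟨u, hu_def⟩ : ∃ u : ℝ, u = -(1/α) := ⟨_, rfl⟩
    rw [← hc_def] at hrec
    have ha0' := ha0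
    have hab' := hab
    obtain ⟨a, ha_def⟩ : ∃ a : ℝ, a = fn n y := ⟨_, rfl⟩
    rw [← ha_def] at hrec ha0 hab
    obtain ⟨b, hb_def⟩ : ∃ b : ℝ, b = f y := ⟨_, rfl⟩
    rw [← hb_def] at hab
    have hA0 : (0:ℝ) < A := by rw [hA_def]; positivity
    have hA1 : 1 < A := by
      rw [hA_def]
      have : 0 < α * y / (α + 1) := by positivity
      linarith
    have hfy : b = A ^ u := by rw [hb_def, hf y, ← hA_def, ← hu_def]
    have hb0 : 0 < b := by
      rw [hfy]
      exact Real.rpow_pos_of_pos hA0 u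
    have hb1 : b < 1 := by
      rw [hfy, hu_def]
      exact Real.rpow_lt_one_of_one_lt_of_neg hA1 hexp
    have hc0 : 0 < c := by rw [hc_def]; positivity
    have hcmul : c * (α + 1) = y / n := by
      rw [hc_def]; field_simp
    have hyn1 : y / n ≤ 1 := by rw [div_le_one hN]; exact hyn
    have hc1 : c < 1 := by nlinarith [hcmul, hc0, hα]
    have hcA : c < A := by linarith
    -- Step A: monotonicity
    have h1 := rpow_sub_rpow_le ha0 hab.le (by linarith : (1:ℝ) ≤ α + 1)
    rw [add_sub_cancel_right] at h1
    have hbα1 : b ^ α < 1 := Real.rpow_lt_one hb0.le hb1 hα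
    have hbα0 : (0:ℝ) ≤ b ^ α := Real.rpow_nonneg hb0.le α
    have stepA : a - c * a ^ (α + 1) < b - c * b ^ (α + 1) := by
      have k1 : c * (b ^ (α+1) - a ^ (α+1)) ≤ c * ((α+1) * b ^ α * (b - a)) :=
        mul_le_mul_of_nonneg_left h1 hc0.le
      have k2 : c * ((α+1) * b ^ α * (b - a)) = (y/n) * (b ^ α * (b - a)) := by
        rw [← hcmul]; ring
      have hba : 0 < b - a := by linarith
      have m1 : b ^ α * (b - a) < 1 * (b - a) := mul_lt_mul_of_pos_right hbα1 hba
      have m2 : (y/n) * (b ^ α * (b - a)) ≤ 1 * (b ^ α * (b - a)) :=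
        mul_le_mul_of_nonneg_right hyn1 (by positivity)
      nlinarith [k1, k2, m1, m2]
    -- Step B: supersolution
    have hBA : B = A + α * c := by
      rw [hB_def, hA_def, hc_def, ← hz]
      field_simp [hN.ne', hα1.ne']
      ring
    have hB0 : (0:ℝ) < B := by rw [hBA]; positivity
    obtain ⟨t, ht_def⟩ : ∃ t : ℝ, t = c / A := ⟨_, rfl⟩
    have ht0 : 0 < t := by rw [ht_def]; positivity
    have ht1 : t < 1 := by rw [ht_def, div_lt_one hA0]; exact hcA
    have hk := key_ineq α t hα ht0 ht1
    have hAC : (0:ℝ) < A - c := by linarith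
    have e1 : 1 - t = (A - c) / A := by rw [ht_def]; field_simp
    have e2 : 1 + α * t = B / A := by rw [hBA, ht_def]; field_simp
    rw [e1, e2, Real.div_rpow hAC.le hA0.le, div_mul_div_comm] at hk
    have h5 : (A - c) ^ α * B ≤ A ^ α * A := by
      have := (div_lt_one (by positivity : (0:ℝ) < A ^ α * A)).mp hk
      linarith
    have hbp : b ^ (α + 1) = A ^ u / A := by
      rw [hfy, ← Real.rpow_mul hA0.le]
      have hms : u * (α + 1) = u - 1 := by rw [hu_def]; field_simp; ring
      rw [hms, Real.rpow_sub hA0, Real.rpow_one]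
    have eL : b - c * b ^ (α + 1) = A ^ u * (A - c) / A := by
      rw [hbp, hfy]
      field_simp
    have hAu0 : (0:ℝ) < A ^ u := Real.rpow_pos_of_pos hA0 u
    have hBu0 : (0:ℝ) < B ^ u := Real.rpow_pos_of_pos hB0 u
    have huα : u * α = -1 := by rw [hu_def]; field_simp
    have hfinal : A ^ u * (A - c) / A ≤ B ^ u := by
      rw [← Real.rpow_le_rpow_iff (by positivity) hBu0.le hα]
      have eα : (A ^ u * (A - c) / A) ^ α = A⁻¹ * (A - c) ^ α / A ^ α := by
        rw [Real.div_rpow (by positivity) hA0.le, Real.mul_rpow hAu0.le hAC.le,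
          ← Real.rpow_mul hA0.le, huα, Real.rpow_neg_one]
      have eβ : (B ^ u) ^ α = B⁻¹ := by
        rw [← Real.rpow_mul hB0.le, huα, Real.rpow_neg_one]
      rw [eα, eβ, inv_eq_one_div B, le_div_iff₀ hB0]
      calc A⁻¹ * (A - c) ^ α / A ^ α * B = (A - c) ^ α * B / (A ^ α * A) := by ring
        _ ≤ 1 := (div_le_one (by positivity)).mpr h5
    constructor
    · -- nonnegativity of fn (n+1) z
      rw [hrec]
      rcases eq_or_lt_of_le ha0 with h0 | hapos
      · rw [← h0, Real.zero_rpow (by linarith : α + 1 ≠ 0)]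
        simp
      · have ha1 : a ≤ 1 := le_of_lt (lt_trans hab hb1)
        have haα : a ^ α ≤ 1 := Real.rpow_le_one ha0 ha1 hα.le
        have hap : a ^ (α + 1) = a ^ α * a := by
          rw [Real.rpow_add hapos, Real.rpow_one]
        have hkey : c * a ^ (α + 1) ≤ a := by
          rw [hap]
          calc c * (a ^ α * a) ≤ 1 * (a ^ α * a) :=
                mul_le_mul_of_nonneg_right hc1.le (by positivity)
            _ = a ^ α * a := by ring
            _ ≤ 1 * a := mul_le_mul_of_nonneg_right haα hapos.le
            _ = a := by ring
        linarith
    · rw [hrec, hf z, ← hB_def, ← hu_def]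
      calc a - c * a ^ (α + 1) < b - c * b ^ (α + 1) := stepA
        _ = A ^ u * (A - c) / A := eL
        _ ≤ B ^ u := hfinal
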